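/- Let n = 2^r − 1 with r ≥ 3, let C ⊆ F_2^n be a perfect binary code, let i be a coordinate, let I and I' be the sets of i-even and i-odd codewords of C, let I_1 be the set of vectors of F_2^n at Hamming distance exactly 1 from I ∪ (I + e_i), and let I'_1 be the set of vectors at distance exactly 1 from I' ∪ (I' + e_i). Then the six sets I, I + e_i, I_1, I'_1, I' + e_i, I' partition F_2^n and form a perfect 6-coloring of the Hamming graph H(n,2) in which: each vertex of I has 1 neighbor in I + e_i and n−1 neighbors in I_1; each vertex of I + e_i has 1 neighbor in I and n−1 in I_1; each vertex of I_1 has 1 neighbor in I, 1 in I + e_i, 1 in I_1 and n−3 in I'_1; each vertex of I'_1 has n−3 neighbors in I_1, 1 in I'_1, 1 in I' + e_i and 1 in I'; each vertex of I' + e_i has n−1 neighbors in I'_1 and 1 in I'; each vertex of I' has n−1 neighbors in I'_1 and 1 in I' + e_i; all other adjacency counts are 0. -/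

import Mathlib

/-- `C` is a perfect binary single-error-correcting code: every vector is at
Hamming distance at most 1 from exactly one codeword. -/
def IsPerfectCode (n : ℕ) (C : Set (Fin n → ZMod 2)) : Prop :=
  ∀ v : Fin n → ZMod 2, ∃! c, c ∈ C ∧ hammingDist v c ≤ 1

/-- `x` is `i`-even: either `wt x` is odd and `x i = 1`, or `wt x` is even and
`x i = 0`. -/
def IEven (n : ℕ) (i : Fin n) (x : Fin n → ZMod 2) : Prop :=
  (Odd (hammingNorm x) ∧ x i = 1) ∨ (Even (hammingNorm x) ∧ x i = 0)

/-- The unit vector `e i`. -/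
def unitVec (n : ℕ) (i : Fin n) : Fin n → ZMod 2 := Pi.single i 1

/-- The set of vectors at Hamming distance exactly 1 from the set `S`. -/
def DistOne (n : ℕ) (S : Set (Fin n → ZMod 2)) : Set (Fin n → ZMod 2) :=
  {v | v ∉ S ∧ ∃ c ∈ S, hammingDist v c = 1}

namespace P14
variable {n : ℕ}

lemma z2 (z : ZMod 2) : z = 0 ∨ z = 1 := by revert z; decide

lemma z2' (z a : ZMod 2) : z = a ∨ z = a + 1 := by
  rcases z2 z with rfl | rfl <;> rcases z2 a with rfl | rfl <;> decide

lemma z2ne (a : ZMod 2) : a + 1 ≠ a := by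
  rcases z2 a with rfl | rfl <;> decide

lemma unitVec_apply (i k : Fin n) : unitVec n i k = if k = i then 1 else 0 := by
  simp [unitVec, Pi.single_apply]

lemma unitVec_self (i : Fin n) : unitVec n i i = 1 := by simp [unitVec_apply]

lemma unitVec_ne_zero (i : Fin n) : unitVec n i ≠ 0 := by
  intro h
  have := congrFun h i
  rw [unitVec_self] at this
  simp at this

lemma unitVec_inj {i j : Fin n} (h : unitVec n i = unitVec n j) : i = j := by
  have := congrFun h i
  rw [unitVec_self, unitVec_apply] at this
  by_contra hne
  rw [if_neg hne] at this
  simp at this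

lemma add_unit_inj (v : Fin n → ZMod 2) {i j : Fin n}
    (h : v + unitVec n i = v + unitVec n j) : i = j :=
  unitVec_inj (by rwa [add_right_inj] at h)

lemma add_self (x : Fin n → ZMod 2) : x + x = 0 :=
  funext fun k => CharTwo.add_self_eq_zero (x k)

lemma add_add_cancel (x y : Fin n → ZMod 2) : x + y + y = x := by
  rw [add_assoc, add_self, add_zero]

lemma hd_eq (x y : Fin n → ZMod 2) : hammingDist x y = hammingNorm (x + y) := by
  rw [hammingDist_eq_hammingNorm]
  congr 1
  exact funext fun k => by rw [Pi.add_apply, Pi.neg_apply, CharTwo.neg_eq]; rfl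

lemma norm_add_unit_zero (u : Fin n → ZMod 2) (j : Fin n) (h : u j = 0) :
    hammingNorm (u + unitVec n j) = hammingNorm u + 1 := by
  classical
  unfold hammingNorm
  have hset : ({k | (u + unitVec n j) k ≠ 0} : Finset (Fin n))
      = insert j ({k | u k ≠ 0} : Finset (Fin n)) := by
    ext k
    by_cases hk : k = j
    · subst hk
      simp [Pi.add_apply, unitVec_self, h]
    · simp [Pi.add_apply, unitVec_apply, hk]
  rw [hset, Finset.card_insert_of_notMem (by simp [h])]

lemma norm_add_unit_one (u : Fin n → ZMod 2) (j : Fin n) (h : u j = 1) :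
    hammingNorm (u + unitVec n j) + 1 = hammingNorm u := by
  have h2 : (u + unitVec n j) j = 0 := by
    rw [Pi.add_apply, unitVec_self, h]
    decide
  have := norm_add_unit_zero (u + unitVec n j) j h2
  rw [add_add_cancel] at this
  omega

lemma norm_unit (j : Fin n) : hammingNorm (unitVec n j) = 1 := by
  have := norm_add_unit_zero (0 : Fin n → ZMod 2) j rfl
  simpa using this

lemma norm_eq_one {u : Fin n → ZMod 2} (h : hammingNorm u = 1) :
    ∃ j, u = unitVec n j := by
  classical
  unfold hammingNorm at h
  obtain ⟨j, hj⟩ := Finset.card_eq_one.mp h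
  have hmem : ∀ k, u k ≠ 0 ↔ k = j := by
    intro k
    rw [← Finset.mem_singleton, ← hj]
    simp
  refine ⟨j, funext fun k => ?_⟩
  rw [unitVec_apply]
  by_cases hkj : k = j
  · rw [if_pos hkj]
    rcases z2 (u k) with h0 | h1
    · exact absurd ((hmem k).mpr hkj) (by simp [h0])
    · exact h1
  · rw [if_neg hkj]
    by_contra hne
    exact hkj ((hmem k).mp hne)

lemma dist_one_iff (x y : Fin n → ZMod 2) :
    hammingDist x y = 1 ↔ ∃ j, y = x + unitVec n j := by
  rw [hd_eq]
  constructor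
  · intro h
    obtain ⟨j, hj⟩ := norm_eq_one h
    refine ⟨j, ?_⟩
    rw [← hj, ← add_assoc, add_self, zero_add]
  · rintro ⟨j, rfl⟩
    rw [← add_assoc, add_self, zero_add, norm_unit]

lemma dist_add_unit (x : Fin n → ZMod 2) (j : Fin n) :
    hammingDist x (x + unitVec n j) = 1 :=
  (dist_one_iff x _).mpr ⟨j, rfl⟩

lemma dist_translate (x y t : Fin n → ZMod 2) :
    hammingDist (x + t) (y + t) = hammingDist x y := by
  rw [hd_eq, hd_eq]
  congr 1
  have : x + t + (y + t) = x + y := by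
    have h1 : x + t + (y + t) = x + y + (t + t) := by ring
    rw [h1, add_self, add_zero]
  rw [this]


/-- parity invariant -/
def eps (i : Fin n) (x : Fin n → ZMod 2) : ZMod 2 := (hammingNorm x : ZMod 2) + x i

lemma iEven_iff (i : Fin n) (x : Fin n → ZMod 2) : IEven n i x ↔ eps i x = 0 := by
  unfold IEven eps
  rcases Nat.even_or_odd (hammingNorm x) with he | ho
  · have h0 : ((hammingNorm x : ℕ) : ZMod 2) = 0 := ZMod.natCast_eq_zero_iff_even.mpr he
    rw [h0]
    have hno : ¬ Odd (hammingNorm x) := by simp [Nat.not_odd_iff_even, he]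
    rcases z2 (x i) with h | h <;> simp [h, he, hno]
  · have h1 : ((hammingNorm x : ℕ) : ZMod 2) = 1 := ZMod.natCast_eq_one_iff_odd.mpr ho
    rw [h1]
    have hne : ¬ Even (hammingNorm x) := by simp [Nat.not_even_iff_odd, ho]
    rcases z2 (x i) with h | h <;> simp [h, ho, hne] <;> decide

lemma natCast_succ_zmod2 (m : ℕ) : ((m + 1 : ℕ) : ZMod 2) = (m : ZMod 2) + 1 := by
  push_cast; ring

lemma eps_add_unit (i j : Fin n) (x : Fin n → ZMod 2) :
    eps i (x + unitVec n j) = eps i x + 1 + unitVec n j i := by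
  unfold eps
  have hc : (x + unitVec n j) i = x i + unitVec n j i := rfl
  rw [hc]
  have hnorm : ((hammingNorm (x + unitVec n j) : ℕ) : ZMod 2) = (hammingNorm x : ZMod 2) + 1 := by
    rcases z2 (x j) with h | h
    · rw [norm_add_unit_zero x j h, natCast_succ_zmod2]
    · have := norm_add_unit_one x j h
      rw [← this, natCast_succ_zmod2]
      rcases z2 ((hammingNorm (x + unitVec n j) : ZMod 2)) with h2 | h2 <;> rw [h2] <;> decide
  rw [hnorm]
  ring

lemma eps_add_unit_self (i : Fin n) (x : Fin n → ZMod 2) :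
    eps i (x + unitVec n i) = eps i x := by
  rw [eps_add_unit, unitVec_self]
  rcases z2 (eps i x) with h | h <;> rw [h] <;> decide

lemma eps_add_unit_ne (i : Fin n) {j : Fin n} (hj : j ≠ i) (x : Fin n → ZMod 2) :
    eps i (x + unitVec n j) = eps i x + 1 := by
  rw [eps_add_unit, unitVec_apply, if_neg (fun h => hj h.symm), add_zero]


section Code
variable {C : Set (Fin n → ZMod 2)} (hC : IsPerfectCode n C)
include hC

/-- the closest codeword -/
noncomputable def cw (v : Fin n → ZMod 2) : Fin n → ZMod 2 := Classical.choose (hC v)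

lemma cw_mem (v : Fin n → ZMod 2) : cw hC v ∈ C := (Classical.choose_spec (hC v)).1.1

lemma cw_dist (v : Fin n → ZMod 2) : hammingDist v (cw hC v) ≤ 1 :=
  (Classical.choose_spec (hC v)).1.2

lemma cw_eq {v c : Fin n → ZMod 2} (hc : c ∈ C) (hd : hammingDist v c ≤ 1) : c = cw hC v :=
  (Classical.choose_spec (hC v)).2 c ⟨hc, hd⟩

lemma cw_self {v : Fin n → ZMod 2} (hv : v ∈ C) : cw hC v = v :=
  (cw_eq hC hv (by simp)).symm

lemma code_close_eq {c₁ c₂ : Fin n → ZMod 2} (h₁ : c₁ ∈ C) (h₂ : c₂ ∈ C)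
    (h : hammingDist c₁ c₂ ≤ 2) : c₁ = c₂ := by
  by_cases h1 : hammingDist c₁ c₂ ≤ 1
  · rw [cw_eq hC h₂ h1, ← cw_eq hC h₁ (by simp)]
  · have h2 : hammingDist c₁ c₂ = 2 := by omega
    rw [hd_eq] at h2
    have hpos : c₁ + c₂ ≠ 0 := by
      intro h0; rw [h0] at h2; simp at h2
    obtain ⟨j, hj⟩ : ∃ j, (c₁ + c₂) j ≠ 0 := by
      by_contra hc
      push_neg at hc
      exact hpos (funext fun k => hc k)
    have hj1 : (c₁ + c₂) j = 1 := by rcases z2 ((c₁ + c₂) j) with h | h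
                                     · exact absurd h hj
                                     · exact h
    set v := c₁ + unitVec n j with hv
    have hd1 : hammingDist v c₁ = 1 := by
      rw [hd_eq, hv]
      have : c₁ + unitVec n j + c₁ = unitVec n j := by
        rw [add_comm c₁ (unitVec n j), add_add_cancel]
      rw [this, norm_unit]
    have hd2 : hammingDist v c₂ = 1 := by
      rw [hd_eq, hv]
      have heq : c₁ + unitVec n j + c₂ = (c₁ + c₂) + unitVec n j := by ring
      rw [heq]
      have := norm_add_unit_one (c₁ + c₂) j hj1
      omega
    rw [cw_eq hC h₁ (le_of_eq hd1), ← cw_eq hC h₂ (le_of_eq hd2)]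

lemma cw_of_dist_one {v c : Fin n → ZMod 2} (hc : c ∈ C) (hd : hammingDist v c = 1) :
    c = cw hC v := cw_eq hC hc (le_of_eq hd)

lemma cw_dist_of_not_mem {v : Fin n → ZMod 2} (hv : v ∉ C) :
    hammingDist v (cw hC v) = 1 := by
  have h := cw_dist hC v
  have hne : hammingDist v (cw hC v) ≠ 0 := by
    intro h0
    rw [eq_of_hammingDist_eq_zero h0] at hv
    exact hv (cw_mem hC v)
  omega

lemma cw_offset {v : Fin n → ZMod 2} (hv : v ∉ C) :
    ∃ j, v = cw hC v + unitVec n j := by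
  have := cw_dist_of_not_mem hC hv
  rw [hammingDist_comm] at this
  exact (dist_one_iff _ _).mp this

lemma add_unit_not_mem {c : Fin n → ZMod 2} (hc : c ∈ C) (j : Fin n) :
    c + unitVec n j ∉ C := by
  intro hmem
  have : c = c + unitVec n j := code_close_eq hC hc hmem (by rw [dist_add_unit]; omega)
  have h0 := add_eq_left.mp this.symm
  exact unitVec_ne_zero j h0

/-- key parity lemma: for a non-codeword, its parity equals that of its codeword
iff it is the codeword plus `e i`. -/
lemma eps_cw_iff (i : Fin n) {v : Fin n → ZMod 2} (hv : v ∉ C) :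
    eps i (cw hC v) = eps i v ↔ v = cw hC v + unitVec n i := by
  obtain ⟨j, hj⟩ := cw_offset hC hv
  constructor
  · intro h
    by_cases hji : j = i
    · rwa [hji] at hj
    · have h2 : eps i v = eps i (cw hC v) + 1 := by
        conv_lhs => rw [hj]
        exact eps_add_unit_ne i hji _
      exact absurd (h.trans h2).symm (z2ne _)
  · intro h
    conv_rhs => rw [h]
    rw [eps_add_unit_self]

end Code

lemma z2solve {x a : ZMod 2} (h : x + 1 = a) : x = a + 1 := by
  rw [← h]
  rcases z2 x with rfl | rfl <;> decide

lemma z2aa (a : ZMod 2) : a + 1 + 1 = a := by rcases z2 a with rfl | rfl <;> decide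

/-- class of codewords of parity `a` -/
def K0 (C : Set (Fin n → ZMod 2)) (i : Fin n) (a : ZMod 2) : Set (Fin n → ZMod 2) :=
  {x | x ∈ C ∧ eps i x = a}

section Code2
variable {C : Set (Fin n → ZMod 2)} (hC : IsPerfectCode n C)

/-- class of non-codewords of parity `a` whose codeword has parity `a` -/
def K1 (i : Fin n) (a : ZMod 2) : Set (Fin n → ZMod 2) :=
  {v | v ∉ C ∧ eps i v = a ∧ eps i (cw hC v) = a}

/-- class of non-codewords of parity `a+1` whose codeword has parity `a` -/
def K2 (i : Fin n) (a : ZMod 2) : Set (Fin n → ZMod 2) :=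
  {v | v ∉ C ∧ eps i v = a + 1 ∧ eps i (cw hC v) = a}

include hC

omit hC in
lemma K0_eqI (i : Fin n) : {x ∈ C | IEven n i x} = K0 C i 0 := by
  ext x; simp [K0, iEven_iff, Set.mem_setOf_eq]

omit hC in
lemma K0_eqI' (i : Fin n) : {x ∈ C | ¬ IEven n i x} = K0 C i 1 := by
  ext x
  simp only [Set.mem_setOf_eq, K0, iEven_iff]
  constructor
  · rintro ⟨h1, h2⟩
    rcases z2 (eps i x) with h | h
    · exact absurd h h2
    · exact ⟨h1, h⟩
  · rintro ⟨h1, h2⟩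
    exact ⟨h1, by rw [h2]; decide⟩

lemma image_K0 (i : Fin n) (a : ZMod 2) :
    (fun x => x + unitVec n i) '' K0 C i a = K1 hC i a := by
  ext v
  constructor
  · rintro ⟨x, ⟨hxC, hxe⟩, rfl⟩
    refine ⟨add_unit_not_mem hC hxC i, ?_, ?_⟩
    · rw [eps_add_unit_self, hxe]
    · rw [← cw_of_dist_one hC hxC (by rw [hammingDist_comm]; exact dist_add_unit x i), hxe]
  · rintro ⟨hvC, hve, hcwe⟩
    have hvi : v = cw hC v + unitVec n i :=
      (eps_cw_iff hC i hvC).mp (by rw [hcwe, hve])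
    exact ⟨cw hC v, ⟨cw_mem hC v, hcwe⟩, hvi.symm⟩

/-- if `w` is a noncodeword neighbor of `v` whose parity agrees with its codeword,
then that codeword is at distance 1 from `v + e i`. -/
lemma cw_neighbor (i : Fin n) {v w : Fin n → ZMod 2} (hd : hammingDist v w = 1)
    (hwC : w ∉ C) (heq : eps i (cw hC w) = eps i w) :
    hammingDist (v + unitVec n i) (cw hC w) = 1 := by
  have hwi : w = cw hC w + unitVec n i := (eps_cw_iff hC i hwC).mp heq
  have hcwv : cw hC w = w + unitVec n i := by
    have := congrArg (· + unitVec n i) hwi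
    simpa [add_add_cancel] using this.symm
  rw [hcwv, dist_translate]
  exact hd

lemma distone_K0 (i : Fin n) (a : ZMod 2) :
    DistOne n (K0 C i a ∪ (fun x => x + unitVec n i) '' K0 C i a) = K2 hC i a := by
  rw [image_K0 hC]
  ext v
  constructor
  · rintro ⟨hvnot, u, hu, hd⟩
    rw [Set.mem_union] at hvnot
    push_neg at hvnot
    obtain ⟨j, rfl⟩ := (dist_one_iff v u).mp hd
    rcases hu with ⟨huC, hue⟩ | ⟨huC, hue, hcue⟩
    · -- the neighbor is a codeword of parity a
      have hvC : v ∉ C := by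
        intro hvC
        have h2 : v = v + unitVec n j :=
          code_close_eq hC hvC huC (by rw [dist_add_unit]; omega)
        exact unitVec_ne_zero j (add_eq_left.mp h2.symm)
      have hcw : cw hC v = v + unitVec n j := (cw_of_dist_one hC huC hd).symm
      have hcwe : eps i (cw hC v) = a := by rw [hcw]; exact hue
      by_cases hji : j = i
      · exfalso
        apply hvnot.2
        rw [hji] at hue
        have hve : eps i v = a := by rw [← eps_add_unit_self i v]; exact hue
        exact ⟨hvC, hve, hcwe⟩
      · refine ⟨hvC, ?_, hcwe⟩
        have h1 : eps i v + 1 = a := (eps_add_unit_ne i hji v).symm.trans hue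
        exact z2solve h1
    · -- the neighbor is in K1
      have hui : v + unitVec n j = cw hC (v + unitVec n j) + unitVec n i :=
        (eps_cw_iff hC i huC).mp (by rw [hcue, hue])
      set w := cw hC (v + unitVec n j) with hw
      have hwC : w ∈ C := cw_mem hC _
      by_cases hji : j = i
      · exfalso
        apply hvnot.1
        rw [hji] at hui hue
        have hvw : v = w := add_right_cancel hui
        have hve : eps i v = a := by rw [← eps_add_unit_self i v]; exact hue
        exact ⟨by rw [hvw]; exact hwC, hve⟩
      · have hdvw : hammingDist v w ≤ 2 := by
          have ht := hammingDist_triangle v (v + unitVec n j) w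
          have h1 : hammingDist (v + unitVec n j) w = 1 := by
            rw [hui, hammingDist_comm]
            exact dist_add_unit w i
          have h2 := dist_add_unit v j
          omega
        have hvC : v ∉ C := by
          intro hvC
          have hveqw : v = w := code_close_eq hC hvC hwC hdvw
          rw [← hveqw] at hui
          exact hji (add_unit_inj v hui)
        have hve : eps i v = a + 1 := by
          have h1 : eps i v + 1 = a := (eps_add_unit_ne i hji v).symm.trans hue
          exact z2solve h1
        refine ⟨hvC, hve, ?_⟩
        rcases z2' (eps i (cw hC v)) a with h | h
        · exact h
        · exfalso
          have hepseq : eps i (cw hC v) = eps i v := by rw [h, hve]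
          have hvi : v = cw hC v + unitVec n i := (eps_cw_iff hC i hvC).mp hepseq
          have hcwv : cw hC v = v + unitVec n i := by
            have := congrArg (· + unitVec n i) hvi
            simpa [add_add_cancel] using this.symm
          have hdcw : hammingDist (cw hC v) w ≤ 2 := by
            have hc : hammingDist (cw hC v) w = 1 := by
              calc hammingDist (cw hC v) w
                  = hammingDist (v + unitVec n i) ((w + unitVec n i) + unitVec n i) := by
                    rw [← hcwv, add_add_cancel]
                _ = hammingDist v (w + unitVec n i) := dist_translate _ _ _
                _ = hammingDist v (v + unitVec n j) := by rw [← hui]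
                _ = 1 := dist_add_unit v j
            omega
          have hcweqw : cw hC v = w := code_close_eq hC (cw_mem hC v) hwC hdcw
          rw [hcweqw] at hcwv
          rw [hcwv] at hui
          rw [add_add_cancel] at hui
          exact unitVec_ne_zero j (add_eq_left.mp hui)
  · rintro ⟨hvC, hve, hcwe⟩
    refine ⟨?_, cw hC v, Or.inl ⟨cw_mem hC v, hcwe⟩, cw_dist_of_not_mem hC hvC⟩
    rw [Set.mem_union]
    push_neg
    constructor
    · intro hmem
      exact hvC hmem.1
    · intro hmem
      obtain ⟨h1, h2, h3⟩ := hmem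
      rw [hve] at h2
      exact z2ne a h2
end Code2


section Count
variable {C : Set (Fin n → ZMod 2)} (hC : IsPerfectCode n C)
include hC

lemma neighbor_not_code {v w : Fin n → ZMod 2} (hv : v ∈ C) (hd : hammingDist v w = 1) :
    w ∉ C := by
  intro hwC
  have h2 : v = w := code_close_eq hC hv hwC (by omega)
  rw [h2] at hd
  simp at hd

lemma cw_neighbor_of_code {v w : Fin n → ZMod 2} (hv : v ∈ C) (hd : hammingDist v w = 1) :
    cw hC w = v := by
  rw [← cw_of_dist_one hC hv (by rwa [hammingDist_comm])]

-- Row 0: v a codeword of parity a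
lemma row0_K0 {v : Fin n → ZMod 2} (i : Fin n) (a b : ZMod 2) (hv : v ∈ K0 C i a) :
    {w | hammingDist v w = 1 ∧ w ∈ K0 C i b} = ∅ := by
  rw [Set.eq_empty_iff_forall_notMem]
  rintro w ⟨hd, hwC, _⟩
  exact neighbor_not_code hC hv.1 hd hwC

lemma row0_K1_same {v : Fin n → ZMod 2} (i : Fin n) (a : ZMod 2) (hv : v ∈ K0 C i a) :
    {w | hammingDist v w = 1 ∧ w ∈ K1 hC i a} = {v + unitVec n i} := by
  ext w
  simp only [Set.mem_setOf_eq, Set.mem_singleton_iff]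
  constructor
  · rintro ⟨hd, hwC, hwe, hcwe⟩
    obtain ⟨j, rfl⟩ := (dist_one_iff v w).mp hd
    by_cases hji : j = i
    · rw [hji]
    · exfalso
      rw [eps_add_unit_ne i hji v, hv.2] at hwe
      exact z2ne a hwe
  · rintro rfl
    refine ⟨dist_add_unit v i, add_unit_not_mem hC hv.1 i, ?_, ?_⟩
    · rw [eps_add_unit_self, hv.2]
    · rw [cw_neighbor_of_code hC hv.1 (dist_add_unit v i), hv.2]

lemma row0_K1_other {v : Fin n → ZMod 2} (i : Fin n) (a : ZMod 2) (hv : v ∈ K0 C i a) :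
    {w | hammingDist v w = 1 ∧ w ∈ K1 hC i (a + 1)} = ∅ := by
  rw [Set.eq_empty_iff_forall_notMem]
  rintro w ⟨hd, hwC, hwe, hcwe⟩
  rw [cw_neighbor_of_code hC hv.1 hd, hv.2] at hcwe
  exact z2ne a hcwe.symm

lemma row0_K2_same {v : Fin n → ZMod 2} (i : Fin n) (a : ZMod 2) (hv : v ∈ K0 C i a) :
    {w | hammingDist v w = 1 ∧ w ∈ K2 hC i a} = (fun m => v + unitVec n m) '' {m | m ≠ i} := by
  ext w
  simp only [Set.mem_setOf_eq, Set.mem_image]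
  constructor
  · rintro ⟨hd, hwC, hwe, hcwe⟩
    obtain ⟨j, rfl⟩ := (dist_one_iff v w).mp hd
    refine ⟨j, ?_, rfl⟩
    intro hji
    rw [hji, eps_add_unit_self, hv.2] at hwe
    exact z2ne a hwe.symm
  · rintro ⟨m, hm, rfl⟩
    have hd := dist_add_unit v m
    refine ⟨hd, neighbor_not_code hC hv.1 hd, ?_, ?_⟩
    · rw [eps_add_unit_ne i hm v, hv.2]
    · rw [cw_neighbor_of_code hC hv.1 hd, hv.2]

lemma row0_K2_other {v : Fin n → ZMod 2} (i : Fin n) (a : ZMod 2) (hv : v ∈ K0 C i a) :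
    {w | hammingDist v w = 1 ∧ w ∈ K2 hC i (a + 1)} = ∅ := by
  rw [Set.eq_empty_iff_forall_notMem]
  rintro w ⟨hd, hwC, hwe, hcwe⟩
  rw [cw_neighbor_of_code hC hv.1 hd, hv.2] at hcwe
  exact z2ne a hcwe.symm

-- rows for non-codewords, K0 columns
lemma rowNC_K0_same {v : Fin n → ZMod 2} (i : Fin n) (a : ZMod 2) (hvC : v ∉ C)
    (hcwe : eps i (cw hC v) = a) :
    {w | hammingDist v w = 1 ∧ w ∈ K0 C i a} = {cw hC v} := by
  ext w
  simp only [Set.mem_setOf_eq, Set.mem_singleton_iff]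
  constructor
  · rintro ⟨hd, hwC, hwe⟩
    exact cw_of_dist_one hC hwC hd
  · rintro rfl
    exact ⟨cw_dist_of_not_mem hC hvC, cw_mem hC v, hcwe⟩

lemma rowNC_K0_other {v : Fin n → ZMod 2} (i : Fin n) (a : ZMod 2) (hvC : v ∉ C)
    (hcwe : eps i (cw hC v) = a) :
    {w | hammingDist v w = 1 ∧ w ∈ K0 C i (a + 1)} = ∅ := by
  rw [Set.eq_empty_iff_forall_notMem]
  rintro w ⟨hd, hwC, hwe⟩
  rw [cw_of_dist_one hC hwC hd, hcwe] at hwe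
  exact z2ne a hwe.symm

-- Row 1: v ∈ K1 a, so v = cw v + e i
lemma row1_cw {v : Fin n → ZMod 2} (i : Fin n) (a : ZMod 2) (hv : v ∈ K1 hC i a) :
    cw hC v = v + unitVec n i := by
  have hvi : v = cw hC v + unitVec n i := (eps_cw_iff hC i hv.1).mp (by rw [hv.2.2, hv.2.1])
  have := congrArg (· + unitVec n i) hvi
  simpa [add_add_cancel] using this.symm

/-- all non-codeword neighbors of `v ∈ K1 a` have codeword parity `a` -/
lemma row1_nbr_cw {v : Fin n → ZMod 2} (i : Fin n) (a : ZMod 2) (hv : v ∈ K1 hC i a)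
    {w : Fin n → ZMod 2} (hd : hammingDist v w = 1) (hwC : w ∉ C) :
    eps i (cw hC w) = a := by
  obtain ⟨hvC, hve, hcwe⟩ := hv
  have hcwv := row1_cw hC i a ⟨hvC, hve, hcwe⟩
  obtain ⟨j, rfl⟩ := (dist_one_iff v w).mp hd
  have hji : j ≠ i := by
    intro hji
    rw [hji, ← hcwv] at hwC
    exact hwC (cw_mem hC v)
  have hwe : eps i (v + unitVec n j) = a + 1 := by rw [eps_add_unit_ne i hji v, hve]
  rcases z2' (eps i (cw hC (v + unitVec n j))) a with h | h
  · exact h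
  · exfalso
    have heq : eps i (cw hC (v + unitVec n j)) = eps i (v + unitVec n j) := by rw [h, hwe]
    have hd1 := cw_neighbor hC i hd hwC heq
    rw [← hcwv] at hd1
    have hcc : cw hC (v + unitVec n j) = cw hC v :=
      code_close_eq hC (cw_mem hC _) (cw_mem hC v) (by rw [hammingDist_comm] at hd1; omega)
    rw [hcc, hcwe] at h
    exact z2ne a h.symm

lemma row1_K1 {v : Fin n → ZMod 2} (i : Fin n) (a b : ZMod 2) (hv : v ∈ K1 hC i a) :
    {w | hammingDist v w = 1 ∧ w ∈ K1 hC i b} = ∅ := by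
  rw [Set.eq_empty_iff_forall_notMem]
  rintro w ⟨hd, hwC, hwe, hcwe⟩
  have h1 := row1_nbr_cw hC i a hv hd hwC
  rw [h1] at hcwe
  -- b = a, so eps w = a, but all non-codeword neighbors have eps = a+1
  obtain ⟨j, rfl⟩ := (dist_one_iff v w).mp hd
  have hji : j ≠ i := by
    intro hji
    rw [hji, ← row1_cw hC i a hv] at hwC
    exact hwC (cw_mem hC v)
  rw [eps_add_unit_ne i hji v, hv.2.1, ← hcwe] at hwe
  exact z2ne a hwe

lemma row1_K2_same {v : Fin n → ZMod 2} (i : Fin n) (a : ZMod 2) (hv : v ∈ K1 hC i a) :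
    {w | hammingDist v w = 1 ∧ w ∈ K2 hC i a} = (fun m => v + unitVec n m) '' {m | m ≠ i} := by
  ext w
  simp only [Set.mem_setOf_eq, Set.mem_image]
  constructor
  · rintro ⟨hd, hwC, hwe, hcwe⟩
    obtain ⟨j, rfl⟩ := (dist_one_iff v w).mp hd
    refine ⟨j, ?_, rfl⟩
    intro hji
    rw [hji, ← row1_cw hC i a hv] at hwC
    exact hwC (cw_mem hC v)
  · rintro ⟨m, hm, rfl⟩
    have hd := dist_add_unit v m
    have hwC : v + unitVec n m ∉ C := by
      intro hwC
      have := cw_of_dist_one hC hwC hd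
      rw [row1_cw hC i a hv] at this
      exact hm (add_unit_inj v this)
    refine ⟨hd, hwC, ?_, row1_nbr_cw hC i a hv hd hwC⟩
    rw [eps_add_unit_ne i hm v, hv.2.1]

lemma row1_K2_other {v : Fin n → ZMod 2} (i : Fin n) (a : ZMod 2) (hv : v ∈ K1 hC i a) :
    {w | hammingDist v w = 1 ∧ w ∈ K2 hC i (a + 1)} = ∅ := by
  rw [Set.eq_empty_iff_forall_notMem]
  rintro w ⟨hd, hwC, hwe, hcwe⟩
  rw [row1_nbr_cw hC i a hv hd hwC] at hcwe
  exact z2ne a hcwe.symm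

end Count


section Count2
variable {C : Set (Fin n → ZMod 2)} (hC : IsPerfectCode n C)
include hC

-- Row 2: v ∈ K2 a, i.e. v = cw v + e j0 with j0 ≠ i
lemma row2_offset {v : Fin n → ZMod 2} (i : Fin n) (a : ZMod 2) (hv : v ∈ K2 hC i a) :
    ∃ j0, j0 ≠ i ∧ cw hC v = v + unitVec n j0 := by
  obtain ⟨hvC, hve, hcwe⟩ := hv
  obtain ⟨j0, hj0⟩ := cw_offset hC hvC
  refine ⟨j0, ?_, ?_⟩
  · intro hji
    rw [hji] at hj0
    have heq := (eps_cw_iff hC i hvC).mpr hj0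
    rw [hcwe, hve] at heq
    exact z2ne a heq.symm
  · have := congrArg (· + unitVec n j0) hj0
    simpa [add_add_cancel] using this.symm

lemma row2_u_not_mem {v : Fin n → ZMod 2} (i : Fin n) (a : ZMod 2) (hv : v ∈ K2 hC i a) :
    v + unitVec n i ∉ C := by
  obtain ⟨hvC, hve, hcwe⟩ := hv
  intro huC
  have h1 : v + unitVec n i = cw hC v := cw_of_dist_one hC huC (dist_add_unit v i)
  rw [← h1, eps_add_unit_self, hve] at hcwe
  exact z2ne a hcwe

lemma row2_cstar {v : Fin n → ZMod 2} (i : Fin n) (a : ZMod 2) (hv : v ∈ K2 hC i a) :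
    eps i (cw hC (v + unitVec n i)) = a := by
  obtain ⟨hvC, hve, hcwe⟩ := hv
  have huC := row2_u_not_mem hC i a ⟨hvC, hve, hcwe⟩
  have hue : eps i (v + unitVec n i) = a + 1 := by rw [eps_add_unit_self, hve]
  rcases z2' (eps i (cw hC (v + unitVec n i))) a with h | h
  · exact h
  · exfalso
    have heq : eps i (cw hC (v + unitVec n i)) = eps i (v + unitVec n i) := by rw [h, hue]
    have hui := (eps_cw_iff hC i huC).mp heq
    have h2 : v = cw hC (v + unitVec n i) := add_right_cancel hui
    rw [h2] at hvC
    exact hvC (cw_mem hC _)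

lemma row2_wstar {v : Fin n → ZMod 2} (i : Fin n) (a : ZMod 2) (hv : v ∈ K2 hC i a) :
    hammingDist v (cw hC (v + unitVec n i) + unitVec n i) = 1 ∧
    cw hC (v + unitVec n i) + unitVec n i ∉ C ∧
    eps i (cw hC (v + unitVec n i) + unitVec n i) = a ∧
    cw hC (cw hC (v + unitVec n i) + unitVec n i) = cw hC (v + unitVec n i) := by
  have huC := row2_u_not_mem hC i a hv
  have hd1 : hammingDist v (cw hC (v + unitVec n i) + unitVec n i) = 1 := by
    have h2 := dist_translate (v + unitVec n i) (cw hC (v + unitVec n i)) (unitVec n i)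
    rw [add_add_cancel] at h2
    rw [h2]
    exact cw_dist_of_not_mem hC huC
  refine ⟨hd1, add_unit_not_mem hC (cw_mem hC _) i, ?_, ?_⟩
  · rw [eps_add_unit_self]
    exact row2_cstar hC i a hv
  · exact (cw_of_dist_one hC (cw_mem hC _)
      (by rw [hammingDist_comm]; exact dist_add_unit _ i)).symm

lemma row2_key {v : Fin n → ZMod 2} (i : Fin n) (a : ZMod 2) (hv : v ∈ K2 hC i a)
    {w : Fin n → ZMod 2} (hd : hammingDist v w = 1) (hwC : w ∉ C)
    (heq : eps i (cw hC w) = eps i w) :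
    w = cw hC (v + unitVec n i) + unitVec n i := by
  have hd1 := cw_neighbor hC i hd hwC heq
  have hcc : cw hC w = cw hC (v + unitVec n i) := cw_of_dist_one hC (cw_mem hC w) hd1
  have hwi : w = cw hC w + unitVec n i := (eps_cw_iff hC i hwC).mp heq
  rw [hcc] at hwi
  exact hwi

lemma row2_K1_same {v : Fin n → ZMod 2} (i : Fin n) (a : ZMod 2) (hv : v ∈ K2 hC i a) :
    {w | hammingDist v w = 1 ∧ w ∈ K1 hC i a} = {cw hC (v + unitVec n i) + unitVec n i} := by
  obtain ⟨hd1, hwsC, hwse, hcws⟩ := row2_wstar hC i a hv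
  ext w
  simp only [Set.mem_setOf_eq, Set.mem_singleton_iff]
  constructor
  · rintro ⟨hd, hwC, hwe, hcwe⟩
    exact row2_key hC i a hv hd hwC (by rw [hcwe, hwe])
  · rintro rfl
    refine ⟨hd1, hwsC, hwse, ?_⟩
    rw [hcws]
    exact row2_cstar hC i a hv

lemma row2_K1_other {v : Fin n → ZMod 2} (i : Fin n) (a : ZMod 2) (hv : v ∈ K2 hC i a) :
    {w | hammingDist v w = 1 ∧ w ∈ K1 hC i (a + 1)} = ∅ := by
  rw [Set.eq_empty_iff_forall_notMem]
  rintro w ⟨hd, hwC, hwe, hcwe⟩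
  obtain ⟨j, rfl⟩ := (dist_one_iff v w).mp hd
  by_cases hji : j = i
  · rw [hji] at hcwe
    rw [row2_cstar hC i a hv] at hcwe
    exact z2ne a hcwe.symm
  · rw [eps_add_unit_ne i hji v, hv.2.1, z2aa] at hwe
    exact z2ne a hwe.symm

lemma row2_K2_same {v : Fin n → ZMod 2} (i : Fin n) (a : ZMod 2) (hv : v ∈ K2 hC i a) :
    {w | hammingDist v w = 1 ∧ w ∈ K2 hC i a} = {v + unitVec n i} := by
  ext w
  simp only [Set.mem_setOf_eq, Set.mem_singleton_iff]
  constructor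
  · rintro ⟨hd, hwC, hwe, hcwe⟩
    obtain ⟨j, rfl⟩ := (dist_one_iff v w).mp hd
    by_cases hji : j = i
    · rw [hji]
    · exfalso
      rw [eps_add_unit_ne i hji v, hv.2.1, z2aa] at hwe
      exact (z2ne a) hwe.symm
  · rintro rfl
    refine ⟨dist_add_unit v i, row2_u_not_mem hC i a hv, ?_, row2_cstar hC i a hv⟩
    rw [eps_add_unit_self, hv.2.1]

lemma row2_K2_other {v : Fin n → ZMod 2} (i j0 m0 : Fin n) (a : ZMod 2) (hv : v ∈ K2 hC i a)
    (hj0 : cw hC v = v + unitVec n j0)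
    (hm0 : cw hC (v + unitVec n i) + unitVec n i = v + unitVec n m0) :
    {w | hammingDist v w = 1 ∧ w ∈ K2 hC i (a + 1)} =
      (fun m => v + unitVec n m) '' {m | m ≠ i ∧ m ≠ j0 ∧ m ≠ m0} := by
  obtain ⟨hd1, hwsC, hwse, hcws⟩ := row2_wstar hC i a hv
  ext w
  simp only [Set.mem_setOf_eq, Set.mem_image]
  constructor
  · rintro ⟨hd, hwC, hwe, hcwe⟩
    obtain ⟨j, rfl⟩ := (dist_one_iff v w).mp hd
    refine ⟨j, ⟨?_, ?_, ?_⟩, rfl⟩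
    · intro hji
      rw [hji, eps_add_unit_self, hv.2.1] at hwe
      rw [z2aa] at hwe
      exact z2ne a hwe
    · intro hjj
      rw [hjj, ← hj0] at hwC
      exact hwC (cw_mem hC v)
    · intro hjm
      rw [hjm, ← hm0] at hcwe
      rw [hcws, row2_cstar hC i a hv] at hcwe
      exact z2ne a hcwe.symm
  · rintro ⟨m, ⟨hmi, hmj, hmm⟩, rfl⟩
    have hd := dist_add_unit v m
    have hwC : v + unitVec n m ∉ C := by
      intro hwC
      have h2 := cw_of_dist_one hC hwC hd
      rw [hj0] at h2
      exact hmj (add_unit_inj v h2)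
    have hwe : eps i (v + unitVec n m) = a := by
      rw [eps_add_unit_ne i hmi v, hv.2.1, z2aa]
    refine ⟨hd, hwC, by rw [hwe, z2aa], ?_⟩
    rcases z2' (eps i (cw hC (v + unitVec n m))) (a + 1) with h | h
    · exact h
    · exfalso
      rw [z2aa] at h
      have hkey := row2_key hC i a hv hd hwC (by rw [h, hwe])
      rw [hm0] at hkey
      exact hmm (add_unit_inj v hkey)

end Count2

-- cardinality helpers
lemma ncard_ne {n : ℕ} (i : Fin n) : {m : Fin n | m ≠ i}.ncard = n - 1 := by
  have h : {m : Fin n | m ≠ i} = ↑(({i} : Finset (Fin n))ᶜ) := by ext m; simp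
  rw [h, Set.ncard_coe_finset, Finset.card_compl, Finset.card_singleton, Fintype.card_fin]

lemma ncard_ne3 {n : ℕ} {i j k : Fin n} (hij : i ≠ j) (hik : i ≠ k) (hjk : j ≠ k) :
    {m : Fin n | m ≠ i ∧ m ≠ j ∧ m ≠ k}.ncard = n - 3 := by
  have h : {m : Fin n | m ≠ i ∧ m ≠ j ∧ m ≠ k} = ↑(({i, j, k} : Finset (Fin n))ᶜ) := by
    ext m
    simp only [Set.mem_setOf_eq, Finset.coe_compl, Set.mem_compl_iff, Finset.coe_insert,
      Set.mem_insert_iff, Finset.coe_singleton, Set.mem_singleton_iff, not_or]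
  rw [h, Set.ncard_coe_finset, Finset.card_compl, Fintype.card_fin]
  have h3 : ({i, j, k} : Finset (Fin n)).card = 3 := by
    rw [Finset.card_insert_of_notMem (by simp [hij, hik]),
      Finset.card_insert_of_notMem (by simp [hjk]), Finset.card_singleton]
  rw [h3]

lemma ncard_image_add_unit {n : ℕ} (v : Fin n → ZMod 2) (s : Set (Fin n)) :
    ((fun m => v + unitVec n m) '' s).ncard = s.ncard :=
  Set.ncard_image_of_injective s (fun a b h => add_unit_inj v h)


section Classify
variable {C : Set (Fin n → ZMod 2)} (hC : IsPerfectCode n C)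

open Classical in
/-- classification of a vertex into the six classes -/
noncomputable def psi (i : Fin n) (v : Fin n → ZMod 2) : Fin 6 :=
  if v ∈ C then (if eps i v = 0 then 0 else 5)
  else if eps i v = 0 then (if eps i (cw hC v) = 0 then 1 else 3)
  else if eps i (cw hC v) = 0 then 2 else 4

lemma psi_spec (i : Fin n) (v : Fin n → ZMod 2) :
    v ∈ ![K0 C i 0, K1 hC i 0, K2 hC i 0, K2 hC i 1, K1 hC i 1, K0 C i 1] (psi hC i v) := by
  unfold psi
  split_ifs with h1 h2 h3 h4 h5
  · have hmem : v ∈ K0 C i 0 := ⟨h1, h2⟩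
    exact hmem
  · have h2' : eps i v = 1 := by
      rcases z2 (eps i v) with h | h
      · exact absurd h h2
      · exact h
    have hmem : v ∈ K0 C i 1 := ⟨h1, h2'⟩
    exact hmem
  · have hmem : v ∈ K1 hC i 0 := ⟨h1, h3, h4⟩
    exact hmem
  · have h4' : eps i (cw hC v) = 1 := by
      rcases z2 (eps i (cw hC v)) with h | h
      · exact absurd h h4
      · exact h
    have hmem : v ∈ K2 hC i 1 := ⟨h1, by rw [h3]; decide, h4'⟩
    exact hmem
  · have h3' : eps i v = 1 := by
      rcases z2 (eps i v) with h | h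
      · exact absurd h h3
      · exact h
    have hmem : v ∈ K2 hC i 0 := ⟨h1, by rw [h3']; decide, h5⟩
    exact hmem
  · have h3' : eps i v = 1 := by
      rcases z2 (eps i v) with h | h
      · exact absurd h h3
      · exact h
    have h5' : eps i (cw hC v) = 1 := by
      rcases z2 (eps i (cw hC v)) with h | h
      · exact absurd h h5
      · exact h
    have hmem : v ∈ K1 hC i 1 := ⟨h1, h3', h5'⟩
    exact hmem

lemma psi_eq_of_mem (i : Fin n) (v : Fin n → ZMod 2) (j : Fin 6)
    (hv : v ∈ ![K0 C i 0, K1 hC i 0, K2 hC i 0, K2 hC i 1, K1 hC i 1, K0 C i 1] j) :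
    psi hC i v = j := by
  fin_cases j
  · have h : v ∈ K0 C i 0 := hv
    simp [psi, h.1, h.2]
  · have h : v ∈ K1 hC i 0 := hv
    simp [psi, h.1, h.2.1, h.2.2]
  · have h : v ∈ K2 hC i 0 := hv
    have h1 : eps i v = 1 := by rw [h.2.1]; decide
    simp [psi, h.1, h1, h.2.2]
  · have h : v ∈ K2 hC i 1 := hv
    have h1 : eps i v = 0 := by rw [h.2.1]; decide
    have h2 : eps i (cw hC v) = 1 := h.2.2
    simp [psi, h.1, h1, h2]
  · have h : v ∈ K1 hC i 1 := hv
    simp [psi, h.1, h.2.1, h.2.2]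
  · have h : v ∈ K0 C i 1 := hv
    simp [psi, h.1, h.2]

lemma row2_K2_other_ncard (i : Fin n) (a : ZMod 2) {v : Fin n → ZMod 2} (hv : v ∈ K2 hC i a) :
    {w | hammingDist v w = 1 ∧ w ∈ K2 hC i (a + 1)}.ncard = n - 3 := by
  obtain ⟨j0, hj0i, hj0⟩ := row2_offset hC i a hv
  obtain ⟨hd1, hwsC, hwse, hcws⟩ := row2_wstar hC i a hv
  obtain ⟨m0, hm0⟩ := (dist_one_iff v _).mp hd1
  have him : i ≠ m0 := by
    intro h
    rw [← h] at hm0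
    rw [hm0, eps_add_unit_self, hv.2.1] at hwse
    exact z2ne a hwse
  have hjm : j0 ≠ m0 := by
    intro h
    rw [h, ← hm0] at hj0
    rw [← hj0] at hwsC
    exact hwsC (cw_mem hC v)
  rw [row2_K2_other hC i j0 m0 a hv hj0 hm0, ncard_image_add_unit,
    ncard_ne3 (Ne.symm hj0i) him hjm]

end Classify

end P14

open P14 in
theorem stmt_14 (r n : ℕ) (hr : 3 ≤ r) (hn : n = 2 ^ r - 1)
    (C : Set (Fin n → ZMod 2)) (hC : IsPerfectCode n C) (i : Fin n)
    (I I' I1 I1' : Set (Fin n → ZMod 2))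
    (hI : I = {x ∈ C | IEven n i x}) (hI' : I' = {x ∈ C | ¬ IEven n i x})
    (hI1 : I1 = DistOne n (I ∪ (fun x => x + unitVec n i) '' I))
    (hI1' : I1' = DistOne n (I' ∪ (fun x => x + unitVec n i) '' I')) :
    (∀ j k : Fin 6, j ≠ k →
      Disjoint (![I, (fun x => x + unitVec n i) '' I, I1, I1',
          (fun x => x + unitVec n i) '' I', I'] j)
        (![I, (fun x => x + unitVec n i) '' I, I1, I1',
          (fun x => x + unitVec n i) '' I', I'] k)) ∧
    (⋃ j : Fin 6, ![I, (fun x => x + unitVec n i) '' I, I1, I1',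
        (fun x => x + unitVec n i) '' I', I'] j) = Set.univ ∧
    (∀ j : Fin 6, ∀ v ∈ ![I, (fun x => x + unitVec n i) '' I, I1, I1',
        (fun x => x + unitVec n i) '' I', I'] j, ∀ k : Fin 6,
      {w | hammingDist v w = 1 ∧
          w ∈ ![I, (fun x => x + unitVec n i) '' I, I1, I1',
            (fun x => x + unitVec n i) '' I', I'] k}.ncard =
        ![![0, 1, n - 1, 0, 0, 0],
          ![1, 0, n - 1, 0, 0, 0],
          ![1, 1, 1, n - 3, 0, 0],
          ![0, 0, n - 3, 1, 1, 1],
          ![0, 0, 0, n - 1, 0, 1],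
          ![0, 0, 0, n - 1, 1, 0]] j k) := by
  subst hI hI' hI1 hI1'
  rw [K0_eqI (C := C) i, K0_eqI' (C := C) i, distone_K0 hC i 0, distone_K0 hC i 1,
    image_K0 hC i 0, image_K0 hC i 1]
  refine ⟨?_, ?_, ?_⟩
  · intro j k hjk
    rw [Set.disjoint_left]
    intro v hvj hvk
    exact hjk ((psi_eq_of_mem hC i v j hvj).symm.trans (psi_eq_of_mem hC i v k hvk))
  · apply Set.eq_univ_of_forall
    intro v
    exact Set.mem_iUnion.mpr ⟨psi hC i v, psi_spec hC i v⟩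
  · intro j
    fin_cases j
    · intro v hv k
      have hv0 : v ∈ K0 C i 0 := hv
      fin_cases k
      · show {w | hammingDist v w = 1 ∧ w ∈ K0 C i 0}.ncard = 0
        rw [row0_K0 hC i 0 0 hv0, Set.ncard_empty]
      · show {w | hammingDist v w = 1 ∧ w ∈ K1 hC i 0}.ncard = 1
        rw [row0_K1_same hC i 0 hv0, Set.ncard_singleton]
      · show {w | hammingDist v w = 1 ∧ w ∈ K2 hC i 0}.ncard = n - 1
        rw [row0_K2_same hC i 0 hv0, ncard_image_add_unit, ncard_ne]
      · show {w | hammingDist v w = 1 ∧ w ∈ K2 hC i (0 + 1)}.ncard = 0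
        rw [row0_K2_other hC i 0 hv0, Set.ncard_empty]
      · show {w | hammingDist v w = 1 ∧ w ∈ K1 hC i (0 + 1)}.ncard = 0
        rw [row0_K1_other hC i 0 hv0, Set.ncard_empty]
      · show {w | hammingDist v w = 1 ∧ w ∈ K0 C i 1}.ncard = 0
        rw [row0_K0 hC i 0 1 hv0, Set.ncard_empty]
    · intro v hv k
      have hv1 : v ∈ K1 hC i 0 := hv
      fin_cases k
      · show {w | hammingDist v w = 1 ∧ w ∈ K0 C i 0}.ncard = 1
        rw [rowNC_K0_same hC i 0 hv1.1 hv1.2.2, Set.ncard_singleton]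
      · show {w | hammingDist v w = 1 ∧ w ∈ K1 hC i 0}.ncard = 0
        rw [row1_K1 hC i 0 0 hv1, Set.ncard_empty]
      · show {w | hammingDist v w = 1 ∧ w ∈ K2 hC i 0}.ncard = n - 1
        rw [row1_K2_same hC i 0 hv1, ncard_image_add_unit, ncard_ne]
      · show {w | hammingDist v w = 1 ∧ w ∈ K2 hC i (0 + 1)}.ncard = 0
        rw [row1_K2_other hC i 0 hv1, Set.ncard_empty]
      · show {w | hammingDist v w = 1 ∧ w ∈ K1 hC i 1}.ncard = 0
        rw [row1_K1 hC i 0 1 hv1, Set.ncard_empty]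
      · show {w | hammingDist v w = 1 ∧ w ∈ K0 C i (0 + 1)}.ncard = 0
        rw [rowNC_K0_other hC i 0 hv1.1 hv1.2.2, Set.ncard_empty]
    · intro v hv k
      have hv2 : v ∈ K2 hC i 0 := hv
      fin_cases k
      · show {w | hammingDist v w = 1 ∧ w ∈ K0 C i 0}.ncard = 1
        rw [rowNC_K0_same hC i 0 hv2.1 hv2.2.2, Set.ncard_singleton]
      · show {w | hammingDist v w = 1 ∧ w ∈ K1 hC i 0}.ncard = 1
        rw [row2_K1_same hC i 0 hv2, Set.ncard_singleton]
      · show {w | hammingDist v w = 1 ∧ w ∈ K2 hC i 0}.ncard = 1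
        rw [row2_K2_same hC i 0 hv2, Set.ncard_singleton]
      · show {w | hammingDist v w = 1 ∧ w ∈ K2 hC i (0 + 1)}.ncard = n - 3
        exact row2_K2_other_ncard hC i 0 hv2
      · show {w | hammingDist v w = 1 ∧ w ∈ K1 hC i (0 + 1)}.ncard = 0
        rw [row2_K1_other hC i 0 hv2, Set.ncard_empty]
      · show {w | hammingDist v w = 1 ∧ w ∈ K0 C i (0 + 1)}.ncard = 0
        rw [rowNC_K0_other hC i 0 hv2.1 hv2.2.2, Set.ncard_empty]
    · intro v hv k
      have hv3 : v ∈ K2 hC i 1 := hv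
      fin_cases k
      · show {w | hammingDist v w = 1 ∧ w ∈ K0 C i (1 + 1)}.ncard = 0
        rw [rowNC_K0_other hC i 1 hv3.1 hv3.2.2, Set.ncard_empty]
      · show {w | hammingDist v w = 1 ∧ w ∈ K1 hC i (1 + 1)}.ncard = 0
        rw [row2_K1_other hC i 1 hv3, Set.ncard_empty]
      · show {w | hammingDist v w = 1 ∧ w ∈ K2 hC i (1 + 1)}.ncard = n - 3
        exact row2_K2_other_ncard hC i 1 hv3
      · show {w | hammingDist v w = 1 ∧ w ∈ K2 hC i 1}.ncard = 1
        rw [row2_K2_same hC i 1 hv3, Set.ncard_singleton]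
      · show {w | hammingDist v w = 1 ∧ w ∈ K1 hC i 1}.ncard = 1
        rw [row2_K1_same hC i 1 hv3, Set.ncard_singleton]
      · show {w | hammingDist v w = 1 ∧ w ∈ K0 C i 1}.ncard = 1
        rw [rowNC_K0_same hC i 1 hv3.1 hv3.2.2, Set.ncard_singleton]
    · intro v hv k
      have hv4 : v ∈ K1 hC i 1 := hv
      fin_cases k
      · show {w | hammingDist v w = 1 ∧ w ∈ K0 C i (1 + 1)}.ncard = 0
        rw [rowNC_K0_other hC i 1 hv4.1 hv4.2.2, Set.ncard_empty]
      · show {w | hammingDist v w = 1 ∧ w ∈ K1 hC i 0}.ncard = 0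
        rw [row1_K1 hC i 1 0 hv4, Set.ncard_empty]
      · show {w | hammingDist v w = 1 ∧ w ∈ K2 hC i (1 + 1)}.ncard = 0
        rw [row1_K2_other hC i 1 hv4, Set.ncard_empty]
      · show {w | hammingDist v w = 1 ∧ w ∈ K2 hC i 1}.ncard = n - 1
        rw [row1_K2_same hC i 1 hv4, ncard_image_add_unit, ncard_ne]
      · show {w | hammingDist v w = 1 ∧ w ∈ K1 hC i 1}.ncard = 0
        rw [row1_K1 hC i 1 1 hv4, Set.ncard_empty]
      · show {w | hammingDist v w = 1 ∧ w ∈ K0 C i 1}.ncard = 1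
        rw [rowNC_K0_same hC i 1 hv4.1 hv4.2.2, Set.ncard_singleton]
    · intro v hv k
      have hv5 : v ∈ K0 C i 1 := hv
      fin_cases k
      · show {w | hammingDist v w = 1 ∧ w ∈ K0 C i 0}.ncard = 0
        rw [row0_K0 hC i 1 0 hv5, Set.ncard_empty]
      · show {w | hammingDist v w = 1 ∧ w ∈ K1 hC i (1 + 1)}.ncard = 0
        rw [row0_K1_other hC i 1 hv5, Set.ncard_empty]
      · show {w | hammingDist v w = 1 ∧ w ∈ K2 hC i (1 + 1)}.ncard = 0
        rw [row0_K2_other hC i 1 hv5, Set.ncard_empty]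
      · show {w | hammingDist v w = 1 ∧ w ∈ K2 hC i 1}.ncard = n - 1
        rw [row0_K2_same hC i 1 hv5, ncard_image_add_unit, ncard_ne]
      · show {w | hammingDist v w = 1 ∧ w ∈ K1 hC i 1}.ncard = 1
        rw [row0_K1_same hC i 1 hv5, Set.ncard_singleton]
      · show {w | hammingDist v w = 1 ∧ w ∈ K0 C i 1}.ncard = 0
        rw [row0_K0 hC i 1 1 hv5, Set.ncard_empty]
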